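/- Let g : ℕ → ℕ satisfy 0 ≤ g(k) ≤ k for every k ≥ 1. Then the sequence whose k-th term is the average-case objective PAR of the bounded-bisection-auction tiling T_{g(k), k−g(k)} for the function A_k is bounded if and only if g is bounded. In particular, for all 0 ≤ c ≤ k this PAR lies between (c+1)/2 and (c+3)/2. -/

import Mathlib

open Finset

/-- The value space `{0,…,2^k−1} × {0,…,2^k−1}`. -/
def Vk (k : ℕ) : Finset (ℕ × ℕ) := Finset.range (2 ^ k) ×ˢ Finset.range (2 ^ k)

/-- A tiling of `Vk k`: a finite collection of nonempty rectangles partitioning `Vk k`. -/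
def IsTiling (k : ℕ) (T : Finset (Finset (ℕ × ℕ))) : Prop :=
  (∀ R ∈ T, ∃ S S' : Finset ℕ, R = S ×ˢ S') ∧
    (∀ R ∈ T, R.Nonempty) ∧ (∀ R ∈ T, R ⊆ Vk k) ∧ ∀ x ∈ Vk k, ∃! R, R ∈ T ∧ x ∈ R

/-- `f`-monochromaticity of a tiling. -/
def Mono {β : Type} (f : ℕ × ℕ → β) (T : Finset (Finset (ℕ × ℕ))) : Prop :=
  ∀ R ∈ T, ∀ x ∈ R, ∀ y ∈ R, f x = f y

/-- The tile of `T` containing `x` (union of all tiles containing `x`; for a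
tiling this is exactly the unique tile containing `x`). -/
def tileOf (T : Finset (Finset (ℕ × ℕ))) (x : ℕ × ℕ) : Finset (ℕ × ℕ) :=
  (T.filter fun R => x ∈ R).sup id

/-- The ideal region of `x`: the level set of `f x` inside `Vk k`. -/
def ideal {β : Type} [DecidableEq β] (k : ℕ) (f : ℕ × ℕ → β) (x : ℕ × ℕ) : Finset (ℕ × ℕ) :=
  (Vk k).filter fun y => f y = f x

/-- Average-case objective PAR of a tiling w.r.t. the uniform distribution. -/
def avgObjPAR {β : Type} [DecidableEq β] (k : ℕ) (f : ℕ × ℕ → β)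
    (T : Finset (Finset (ℕ × ℕ))) : ℚ :=
  (∑ x ∈ Vk k, ((ideal k f x).card : ℚ) / ((tileOf T x).card : ℚ)) / 2 ^ (2 * k)

/-- Average-case PAR with respect to party 1. -/
def avgPAR1 {β : Type} [DecidableEq β] (k : ℕ) (f : ℕ × ℕ → β)
    (T : Finset (Finset (ℕ × ℕ))) : ℚ :=
  (∑ x ∈ Vk k,
      (((Finset.range (2 ^ k)).filter fun y => f (x.1, y) = f x).card : ℚ) /
        (((Finset.range (2 ^ k)).filter fun y => (x.1, y) ∈ tileOf T x).card : ℚ)) /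
    2 ^ (2 * k)

/-- Average-case PAR with respect to party 2. -/
def avgPAR2 {β : Type} [DecidableEq β] (k : ℕ) (f : ℕ × ℕ → β)
    (T : Finset (Finset (ℕ × ℕ))) : ℚ :=
  (∑ x ∈ Vk k,
      (((Finset.range (2 ^ k)).filter fun y => f (y, x.2) = f x).card : ℚ) /
        (((Finset.range (2 ^ k)).filter fun y => (y, x.2) ∈ tileOf T x).card : ℚ)) /
    2 ^ (2 * k)

/-- The millionaires function: `1` if `x1 ≥ x2`, else `2`. -/
def Mil (x : ℕ × ℕ) : ℕ := if x.2 ≤ x.1 then 1 else 2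

/-- The second-price auction function. -/
def Auc (x : ℕ × ℕ) : ℕ × ℕ := if x.2 ≤ x.1 then (1, x.2) else (2, x.1)

/-- Translate a tile by `(a, a)`. -/
def shiftTile (a : ℕ) (R : Finset (ℕ × ℕ)) : Finset (ℕ × ℕ) :=
  R.image fun p => (p.1 + a, p.2 + a)

/-- The bisection-protocol tiling `B_k`. -/
def Btile : ℕ → Finset (Finset (ℕ × ℕ))
  | 0 => {{(0, 0)}}
  | j + 1 =>
    Btile j ∪ (Btile j).image (shiftTile (2 ^ j)) ∪
      {Finset.range (2 ^ j) ×ˢ Finset.Ico (2 ^ j) (2 ^ (j + 1)),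
        Finset.Ico (2 ^ j) (2 ^ (j + 1)) ×ˢ Finset.range (2 ^ j)}

/-- The bounded-bisection-auction tiling `T_{c,i}`. -/
def BBA : ℕ → ℕ → Finset (Finset (ℕ × ℕ))
  | 0, i =>
    (Finset.range (2 ^ i)).image (fun p => Finset.Ico p (2 ^ i) ×ˢ ({p} : Finset ℕ)) ∪
      (Finset.range (2 ^ i - 1)).image fun p => ({p} : Finset ℕ) ×ˢ Finset.Ico (p + 1) (2 ^ i)
  | c + 1, i =>
    BBA c i ∪ (BBA c i).image (shiftTile (2 ^ (c + i))) ∪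
      (Finset.range (2 ^ (c + i))).image
        (fun j => Finset.Ico (2 ^ (c + i)) (2 ^ (c + i + 1)) ×ˢ ({j} : Finset ℕ)) ∪
      (Finset.range (2 ^ (c + i))).image fun j =>
        ({j} : Finset ℕ) ×ˢ Finset.Ico (2 ^ (c + i)) (2 ^ (c + i + 1))

/-- The public-good function: `true` iff `x1 + x2 ≥ 2^k − 1` ("Build"). -/
def PG (k : ℕ) (x : ℕ × ℕ) : Bool := decide (2 ^ k - 1 ≤ x.1 + x.2)

/-- The truthful public-good function: `none` = "Do Not Build". -/
def TPG (c : ℕ) (x : ℕ × ℕ) : Option (ℕ × ℕ) :=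
  if x.1 + x.2 < c then none else some (c - x.2, c - x.1)

/-- The tiling of `Vk k` into singleton cells (sealed-bid auction). -/
def sealedTiling (k : ℕ) : Finset (Finset (ℕ × ℕ)) :=
  (Vk k).image fun x => ({x} : Finset (ℕ × ℕ))


lemma mem_Vk {k : ℕ} {x : ℕ × ℕ} : x ∈ Vk k ↔ x.1 < 2 ^ k ∧ x.2 < 2 ^ k := by
  simp [Vk]


def icard (k : ℕ) (x : ℕ × ℕ) : ℚ :=
  if x.2 ≤ x.1 then 2 ^ k - x.2 else 2 ^ k - 1 - x.1
def tq : ℕ → ℕ → ℕ × ℕ → ℚ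
  | 0, i, x => if x.2 ≤ x.1 then 2 ^ i - x.2 else 2 ^ i - 1 - x.1
  | c + 1, i, x =>
    if x.1 < 2 ^ (c + i) then
      if x.2 < 2 ^ (c + i) then tq c i x else 2 ^ (c + i)
    else
      if x.2 < 2 ^ (c + i) then 2 ^ (c + i) else tq c i (x.1 - 2 ^ (c + i), x.2 - 2 ^ (c + i))

def Ssum (c i : ℕ) : ℚ :=
  ∑ a ∈ Finset.range (2 ^ (c + i)), ∑ b ∈ Finset.range (2 ^ (c + i)),
    icard (c + i) (a, b) / tq c i (a, b)
def Hsum (c i : ℕ) : ℚ :=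
  ∑ a ∈ Finset.range (2 ^ (c + i)), ∑ b ∈ Finset.range (2 ^ (c + i)), 1 / tq c i (a, b)


lemma mem_BBA_zero {i : ℕ} {R : Finset (ℕ × ℕ)} :
    R ∈ BBA 0 i ↔ (∃ p < 2 ^ i, R = Finset.Ico p (2 ^ i) ×ˢ ({p} : Finset ℕ)) ∨
      ∃ p < 2 ^ i - 1, R = ({p} : Finset ℕ) ×ˢ Finset.Ico (p + 1) (2 ^ i) := by
  show R ∈ _ ∪ _ ↔ _
  simp only [Finset.mem_union, Finset.mem_image, Finset.mem_range]
  constructor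
  · rintro (⟨p, hp, rfl⟩ | ⟨p, hp, rfl⟩)
    · exact Or.inl ⟨p, hp, rfl⟩
    · exact Or.inr ⟨p, hp, rfl⟩
  · rintro (⟨p, hp, rfl⟩ | ⟨p, hp, rfl⟩)
    · exact Or.inl ⟨p, hp, rfl⟩
    · exact Or.inr ⟨p, hp, rfl⟩

lemma mem_BBA_succ {c i : ℕ} {R : Finset (ℕ × ℕ)} :
    R ∈ BBA (c + 1) i ↔ R ∈ BBA c i ∨ (∃ R' ∈ BBA c i, R = shiftTile (2 ^ (c + i)) R') ∨
      (∃ j < 2 ^ (c + i), R = Finset.Ico (2 ^ (c + i)) (2 ^ (c + i + 1)) ×ˢ ({j} : Finset ℕ)) ∨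
      ∃ j < 2 ^ (c + i), R = ({j} : Finset ℕ) ×ˢ Finset.Ico (2 ^ (c + i)) (2 ^ (c + i + 1)) := by
  show R ∈ _ ∪ _ ∪ _ ∪ _ ↔ _
  simp only [Finset.mem_union, Finset.mem_image, Finset.mem_range]
  constructor
  · rintro (((h | ⟨R', hR', rfl⟩) | ⟨j, hj, rfl⟩) | ⟨j, hj, rfl⟩)
    · exact Or.inl h
    · exact Or.inr (Or.inl ⟨R', hR', rfl⟩)
    · exact Or.inr (Or.inr (Or.inl ⟨j, hj, rfl⟩))
    · exact Or.inr (Or.inr (Or.inr ⟨j, hj, rfl⟩))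
  · rintro (h | ⟨R', hR', rfl⟩ | ⟨j, hj, rfl⟩ | ⟨j, hj, rfl⟩)
    · exact Or.inl (Or.inl (Or.inl h))
    · exact Or.inl (Or.inl (Or.inr ⟨R', hR', rfl⟩))
    · exact Or.inl (Or.inr ⟨j, hj, rfl⟩)
    · exact Or.inr ⟨j, hj, rfl⟩

lemma mem_shiftTile {a : ℕ} {R : Finset (ℕ × ℕ)} {x : ℕ × ℕ} :
    x ∈ shiftTile a R ↔ ∃ p ∈ R, p.1 + a = x.1 ∧ p.2 + a = x.2 := by
  simp [shiftTile, Prod.ext_iff]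

lemma bba_subset : ∀ c i, ∀ R ∈ BBA c i, ∀ p ∈ R, p.1 < 2 ^ (c + i) ∧ p.2 < 2 ^ (c + i) := by
  intro c
  induction c with
  | zero =>
    intro i R hR p hp
    rw [mem_BBA_zero] at hR
    rw [Nat.zero_add]
    rcases hR with ⟨q, hq, rfl⟩ | ⟨q, hq, rfl⟩ <;>
      simp only [Finset.mem_product, Finset.mem_Ico, Finset.mem_singleton] at hp <;> omega
  | succ c ih =>
    intro i R hR p hp
    rw [mem_BBA_succ] at hR
    have h2 : 2 ^ (c + 1 + i) = 2 * 2 ^ (c + i) := by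
      rw [show c + 1 + i = (c + i) + 1 by omega, pow_succ]; ring
    have h3 : c + i + 1 = c + 1 + i := by omega
    rcases hR with h | ⟨R', hR', rfl⟩ | ⟨j, hj, rfl⟩ | ⟨j, hj, rfl⟩
    · have := ih i R h p hp; omega
    · rw [mem_shiftTile] at hp
      obtain ⟨q, hq, hq1, hq2⟩ := hp
      have := ih i R' hR' q hq
      omega
    · simp only [Finset.mem_product, Finset.mem_Ico, Finset.mem_singleton, h3] at hp
      omega
    · simp only [Finset.mem_product, Finset.mem_Ico, Finset.mem_singleton, h3] at hp
      omega

lemma tile_filter : ∀ c i (x : ℕ × ℕ), x.1 < 2 ^ (c + i) → x.2 < 2 ^ (c + i) →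
    ∃ R : Finset (ℕ × ℕ), (BBA c i).filter (fun R => x ∈ R) = {R} ∧ (R.card : ℚ) = tq c i x := by
  intro c
  induction c with
  | zero =>
    intro i x hx1 hx2
    rw [Nat.zero_add] at hx1 hx2
    rcases le_or_gt x.2 x.1 with h | h
    · refine ⟨Finset.Ico x.2 (2 ^ i) ×ˢ ({x.2} : Finset ℕ), ?_, ?_⟩
      · ext S
        simp only [Finset.mem_filter, Finset.mem_singleton]
        constructor
        · rintro ⟨hS, hxS⟩
          rw [mem_BBA_zero] at hS
          rcases hS with ⟨p, hp, rfl⟩ | ⟨p, hp, rfl⟩ <;>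
            simp only [Finset.mem_product, Finset.mem_Ico, Finset.mem_singleton] at hxS
          · obtain ⟨_, h2⟩ := hxS; rw [h2]
          · omega
        · rintro rfl
          refine ⟨mem_BBA_zero.mpr (Or.inl ⟨x.2, by omega, rfl⟩), ?_⟩
          simp only [Finset.mem_product, Finset.mem_Ico, Finset.mem_singleton, and_true]
          omega
      · simp only [tq, if_pos h, Finset.card_product, Nat.card_Ico, Finset.card_singleton]
        push_cast [Nat.cast_sub (by omega : x.2 ≤ 2 ^ i)]
        ring
    · refine ⟨({x.1} : Finset ℕ) ×ˢ Finset.Ico (x.1 + 1) (2 ^ i), ?_, ?_⟩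
      · ext S
        simp only [Finset.mem_filter, Finset.mem_singleton]
        constructor
        · rintro ⟨hS, hxS⟩
          rw [mem_BBA_zero] at hS
          rcases hS with ⟨p, hp, rfl⟩ | ⟨p, hp, rfl⟩ <;>
            simp only [Finset.mem_product, Finset.mem_Ico, Finset.mem_singleton] at hxS
          · omega
          · obtain ⟨h1, _⟩ := hxS; rw [h1]
        · rintro rfl
          refine ⟨mem_BBA_zero.mpr (Or.inr ⟨x.1, by omega, rfl⟩), ?_⟩
          simp only [Finset.mem_product, Finset.mem_Ico, Finset.mem_singleton, true_and]
          omega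
      · simp only [tq, if_neg (not_le.mpr h), Finset.card_product, Nat.card_Ico,
          Finset.card_singleton]
        push_cast [Nat.cast_sub (by omega : x.1 + 1 ≤ 2 ^ i)]
        ring
  | succ c ih =>
    intro i x hx1 hx2
    have hpow : 2 ^ (c + 1 + i) = 2 * 2 ^ (c + i) := by
      rw [show c + 1 + i = (c + i) + 1 by omega, pow_succ]; ring
    have h3 : c + i + 1 = c + 1 + i := by omega
    set n := 2 ^ (c + i) with hn
    by_cases ha : x.1 < n <;> by_cases hb : x.2 < n
    · -- lower-left quadrant
      obtain ⟨R, hR, hcard⟩ := ih i x ha hb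
      refine ⟨R, ?_, ?_⟩
      · ext S
        simp only [Finset.mem_filter, Finset.mem_singleton]
        constructor
        · rintro ⟨hS, hxS⟩
          rw [mem_BBA_succ] at hS
          rcases hS with h | ⟨R', hR', rfl⟩ | ⟨j, hj, rfl⟩ | ⟨j, hj, rfl⟩
          · have : S ∈ (BBA c i).filter (fun R => x ∈ R) := Finset.mem_filter.mpr ⟨h, hxS⟩
            rw [hR, Finset.mem_singleton] at this
            exact this
          · rw [mem_shiftTile] at hxS; obtain ⟨q, _, hq1, _⟩ := hxS; omega
          · simp only [Finset.mem_product, Finset.mem_Ico, Finset.mem_singleton] at hxS; omega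
          · simp only [Finset.mem_product, Finset.mem_Ico, Finset.mem_singleton] at hxS; omega
        · intro hSR
          rw [hSR]
          have hmem : R ∈ (BBA c i).filter (fun R => x ∈ R) := by
            rw [hR]; exact Finset.mem_singleton_self R
          rw [Finset.mem_filter] at hmem
          exact ⟨mem_BBA_succ.mpr (Or.inl hmem.1), hmem.2⟩
      · rw [show tq (c + 1) i x = if x.1 < n then (if x.2 < n then tq c i x else (2:ℚ) ^ (c + i)) else (if x.2 < n then (2:ℚ) ^ (c + i) else tq c i (x.1 - n, x.2 - n)) from rfl, if_pos ha, if_pos hb]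
        exact hcard
    · -- column region: x.1 < n ≤ x.2
      refine ⟨({x.1} : Finset ℕ) ×ˢ Finset.Ico n (2 ^ (c + i + 1)), ?_, ?_⟩
      · ext S
        simp only [Finset.mem_filter, Finset.mem_singleton]
        constructor
        · rintro ⟨hS, hxS⟩
          rw [mem_BBA_succ] at hS
          rcases hS with h | ⟨R', hR', rfl⟩ | ⟨j, hj, rfl⟩ | ⟨j, hj, rfl⟩
          · have := bba_subset c i S h x hxS; omega
          · rw [mem_shiftTile] at hxS; obtain ⟨q, _, hq1, _⟩ := hxS; omega
          · simp only [Finset.mem_product, Finset.mem_Ico, Finset.mem_singleton] at hxS; omega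
          · simp only [Finset.mem_product, Finset.mem_Ico, Finset.mem_singleton] at hxS
            rw [hxS.1]
        · rintro rfl
          refine ⟨mem_BBA_succ.mpr (Or.inr (Or.inr (Or.inr ⟨x.1, ha, rfl⟩))), ?_⟩
          simp only [Finset.mem_product, Finset.mem_Ico, Finset.mem_singleton, true_and, h3]
          omega
      · have h4 : 2 ^ (c + i + 1) - 2 ^ (c + i) = 2 ^ (c + i) := by
          rw [pow_succ]; omega
        rw [show tq (c + 1) i x = if x.1 < n then (if x.2 < n then tq c i x else (2:ℚ) ^ (c + i)) else (if x.2 < n then (2:ℚ) ^ (c + i) else tq c i (x.1 - n, x.2 - n)) from rfl, if_pos ha, if_neg hb]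
        simp only [Finset.card_product, Nat.card_Ico, Finset.card_singleton, mul_one, one_mul]
        rw [hn, h4]; norm_num
    · -- row region: x.2 < n ≤ x.1
      refine ⟨Finset.Ico n (2 ^ (c + i + 1)) ×ˢ ({x.2} : Finset ℕ), ?_, ?_⟩
      · ext S
        simp only [Finset.mem_filter, Finset.mem_singleton]
        constructor
        · rintro ⟨hS, hxS⟩
          rw [mem_BBA_succ] at hS
          rcases hS with h | ⟨R', hR', rfl⟩ | ⟨j, hj, rfl⟩ | ⟨j, hj, rfl⟩
          · have := bba_subset c i S h x hxS; omega
          · rw [mem_shiftTile] at hxS; obtain ⟨q, _, _, hq2⟩ := hxS; omega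
          · simp only [Finset.mem_product, Finset.mem_Ico, Finset.mem_singleton] at hxS
            rw [hxS.2]
          · simp only [Finset.mem_product, Finset.mem_Ico, Finset.mem_singleton] at hxS; omega
        · rintro rfl
          refine ⟨mem_BBA_succ.mpr (Or.inr (Or.inr (Or.inl ⟨x.2, hb, rfl⟩))), ?_⟩
          simp only [Finset.mem_product, Finset.mem_Ico, Finset.mem_singleton, and_true, h3]
          omega
      · have h4 : 2 ^ (c + i + 1) - 2 ^ (c + i) = 2 ^ (c + i) := by
          rw [pow_succ]; omega
        rw [show tq (c + 1) i x = if x.1 < n then (if x.2 < n then tq c i x else (2:ℚ) ^ (c + i)) else (if x.2 < n then (2:ℚ) ^ (c + i) else tq c i (x.1 - n, x.2 - n)) from rfl, if_neg ha, if_pos hb]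
        simp only [Finset.card_product, Nat.card_Ico, Finset.card_singleton, mul_one, one_mul]
        rw [hn, h4]; norm_num
    · -- upper-right quadrant
      have ha' : x.1 - n < n := by omega
      have hb' : x.2 - n < n := by omega
      obtain ⟨R, hR, hcard⟩ := ih i (x.1 - n, x.2 - n) ha' hb'
      refine ⟨shiftTile n R, ?_, ?_⟩
      · ext S
        simp only [Finset.mem_filter, Finset.mem_singleton]
        constructor
        · rintro ⟨hS, hxS⟩
          rw [mem_BBA_succ] at hS
          rcases hS with h | ⟨R', hR', rfl⟩ | ⟨j, hj, rfl⟩ | ⟨j, hj, rfl⟩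
          · have := bba_subset c i S h x hxS; omega
          · rw [mem_shiftTile] at hxS
            obtain ⟨q, hq, hq1, hq2⟩ := hxS
            have hq' : q = (x.1 - n, x.2 - n) := by
              have := bba_subset c i R' hR' q hq
              ext <;> simp <;> omega
            have : R' ∈ (BBA c i).filter (fun R => (x.1 - n, x.2 - n) ∈ R) :=
              Finset.mem_filter.mpr ⟨hR', hq' ▸ hq⟩
            rw [hR, Finset.mem_singleton] at this
            rw [this]
          · simp only [Finset.mem_product, Finset.mem_Ico, Finset.mem_singleton] at hxS; omega
          · simp only [Finset.mem_product, Finset.mem_Ico, Finset.mem_singleton] at hxS; omega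
        · rintro rfl
          have hRmem : R ∈ (BBA c i).filter (fun R => (x.1 - n, x.2 - n) ∈ R) := by
            rw [hR]; exact Finset.mem_singleton_self R
          rw [Finset.mem_filter] at hRmem
          refine ⟨mem_BBA_succ.mpr (Or.inr (Or.inl ⟨R, hRmem.1, rfl⟩)), ?_⟩
          rw [mem_shiftTile]
          exact ⟨(x.1 - n, x.2 - n), hRmem.2, by simp; omega, by simp; omega⟩
      · have : (shiftTile n R).card = R.card := by
          apply Finset.card_image_of_injective
          intro p q hpq
          simp only [Prod.ext_iff] at hpq ⊢
          omega
        rw [this, hcard]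
        rw [show tq (c + 1) i x = if x.1 < n then (if x.2 < n then tq c i x else (2:ℚ) ^ (c + i)) else (if x.2 < n then (2:ℚ) ^ (c + i) else tq c i (x.1 - n, x.2 - n)) from rfl, if_neg ha, if_neg hb]

lemma ideal_card {k : ℕ} {x : ℕ × ℕ} (hx : x ∈ Vk k) :
    ((ideal k Auc x).card : ℚ) = icard k x := by
  rw [mem_Vk] at hx
  obtain ⟨h1, h2⟩ := hx
  rcases le_or_gt x.2 x.1 with h | h
  · have : ideal k Auc x = Finset.Ico x.2 (2 ^ k) ×ˢ ({x.2} : Finset ℕ) := by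
      ext y
      simp only [ideal, Auc, mem_Vk, Finset.mem_filter, Finset.mem_product,
        Finset.mem_Ico, Finset.mem_singleton, if_pos h]
      constructor
      · rintro ⟨⟨hy1, hy2⟩, hy⟩
        split_ifs at hy with h'
        · simp only [Prod.mk.injEq] at hy; omega
        · simp only [Prod.mk.injEq] at hy; omega
      · rintro ⟨⟨ha, hb⟩, hc⟩
        refine ⟨⟨hb, by omega⟩, ?_⟩
        rw [if_pos (by omega)]
        simp [hc]
    rw [this]
    simp only [icard, if_pos h, Finset.card_product, Nat.card_Ico, Finset.card_singleton]
    push_cast [Nat.cast_sub (le_of_lt (lt_of_le_of_lt h h1))]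
    ring
  · have : ideal k Auc x = ({x.1} : Finset ℕ) ×ˢ Finset.Ico (x.1 + 1) (2 ^ k) := by
      ext y
      simp only [ideal, Auc, mem_Vk, Finset.mem_filter, Finset.mem_product,
        Finset.mem_Ico, Finset.mem_singleton, if_neg (not_le.mpr h)]
      constructor
      · rintro ⟨⟨hy1, hy2⟩, hy⟩
        split_ifs at hy with h'
        · simp only [Prod.mk.injEq] at hy; omega
        · simp only [Prod.mk.injEq] at hy; omega
      · rintro ⟨ha, hb, hc⟩
        refine ⟨⟨by omega, hc⟩, ?_⟩
        rw [if_neg (by omega)]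
        simp [ha]
    rw [this]
    simp only [icard, if_neg (not_le.mpr h), Finset.card_product, Nat.card_Ico,
      Finset.card_singleton]
    push_cast [Nat.cast_sub (show x.1 + 1 ≤ 2 ^ k by omega)]
    ring

lemma tq_zero (i : ℕ) (x : ℕ × ℕ) : tq 0 i x = icard i x := rfl

lemma icard_pos {k : ℕ} {a b : ℕ} (ha : a < 2 ^ k) (hb : b < 2 ^ k) :
    0 < icard k (a, b) := by
  have ha' : (a : ℚ) < 2 ^ k := by exact_mod_cast ha
  have hb' : (b : ℚ) < 2 ^ k := by exact_mod_cast hb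
  unfold icard
  dsimp only
  split_ifs with h
  · linarith
  · have : (a : ℚ) + 1 ≤ b := by exact_mod_cast Nat.succ_le_of_lt (not_le.mp h)
    linarith

lemma icard_succ (k : ℕ) (x : ℕ × ℕ) : icard (k + 1) x = icard k x + 2 ^ k := by
  unfold icard
  split_ifs <;> push_cast <;> ring

lemma icard_shift (k : ℕ) (n a b : ℕ) (hn : n = 2 ^ k) :
    icard (k + 1) (n + a, n + b) = icard k (a, b) := by
  subst hn
  unfold icard
  dsimp only
  by_cases h : b ≤ a
  · rw [if_pos (by omega), if_pos h]
    push_cast; ring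
  · rw [if_neg (by omega), if_neg h]
    push_cast; ring

lemma sum_range_cast (n : ℕ) : ∑ a ∈ Finset.range n, (a : ℚ) = n * (n - 1) / 2 := by
  induction n with
  | zero => simp
  | succ m ih =>
    rw [Finset.sum_range_succ, ih]
    push_cast
    ring

lemma sum_range_two_mul (n : ℕ) (f : ℕ → ℚ) :
    ∑ a ∈ Finset.range (2 * n), f a =
      ∑ a ∈ Finset.range n, f a + ∑ a ∈ Finset.range n, f (n + a) := by
  have h1 : ∑ a ∈ Finset.Ico n (2 * n), f a = ∑ a ∈ Finset.range n, f (n + a) := by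
    rw [Finset.sum_Ico_eq_sum_range, show 2 * n - n = n by omega]
  rw [Finset.range_eq_Ico, ← Finset.sum_Ico_consecutive f (Nat.zero_le n) (by omega), h1,
    ← Finset.range_eq_Ico]

-- the base case sums
lemma Hsum_zero (i : ℕ) : Hsum 0 i = 2 * 2 ^ i - 1 := by
  have hN : (0:ℕ) + i = i := by omega
  unfold Hsum
  rw [hN]
  have key : ∀ a ∈ Finset.range (2 ^ i), ∑ b ∈ Finset.range (2 ^ i), 1 / tq 0 i (a, b) =
      (∑ b ∈ Finset.range (2 ^ i), if b ≤ a then 1 / (2 ^ i - (b:ℚ)) else 0) +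
        (if a + 1 = 2 ^ i then 0 else 1) := by
    intro a ha
    rw [Finset.mem_range] at ha
    have : ∀ b ∈ Finset.range (2 ^ i), 1 / tq 0 i (a, b) =
        (if b ≤ a then 1 / (2 ^ i - (b:ℚ)) else 0) +
          (if b ≤ a then 0 else 1 / (2 ^ i - 1 - (a:ℚ))) := by
      intro b hb
      rw [tq_zero]
      unfold icard
      dsimp only
      split_ifs <;> ring
    rw [Finset.sum_congr rfl this, Finset.sum_add_distrib]
    congr 1
    -- second piece
    have h2 : ∀ b ∈ Finset.range (2 ^ i), (if b ≤ a then (0:ℚ) else 1 / (2 ^ i - 1 - (a:ℚ))) =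
        if b ≤ a then 0 else 1 / (2 ^ i - 1 - (a:ℚ)) := fun _ _ => rfl
    rw [Finset.sum_ite]
    simp only [Finset.sum_const_zero, zero_add, Finset.sum_const, nsmul_eq_mul]
    have hfil : (Finset.range (2 ^ i)).filter (fun b => ¬ b ≤ a) = Finset.Ico (a + 1) (2 ^ i) := by
      ext b; simp [Finset.mem_Ico]; omega
    rw [hfil, Nat.card_Ico]
    by_cases hcase : a + 1 = 2 ^ i
    · rw [if_pos hcase]
      simp [hcase]
    · rw [if_neg hcase]
      have h1 : ((2 ^ i - (a + 1) : ℕ) : ℚ) = 2 ^ i - 1 - a := by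
        push_cast [Nat.cast_sub (by omega : a + 1 ≤ 2 ^ i)]
        ring
      rw [h1]
      have : (2:ℚ) ^ i - 1 - a ≠ 0 := by
        have : ((a:ℚ)) + 1 < 2 ^ i := by
          have : a + 1 < 2 ^ i := by omega
          exact_mod_cast this
        intro h; linarith
      field_simp
  rw [Finset.sum_congr rfl key, Finset.sum_add_distrib]
  have part1 : ∑ a ∈ Finset.range (2 ^ i),
      (∑ b ∈ Finset.range (2 ^ i), if b ≤ a then 1 / (2 ^ i - (b:ℚ)) else 0) = 2 ^ i := by
    rw [Finset.sum_comm]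
    have : ∀ b ∈ Finset.range (2 ^ i),
        (∑ a ∈ Finset.range (2 ^ i), if b ≤ a then 1 / (2 ^ i - (b:ℚ)) else 0) = 1 := by
      intro b hb
      rw [Finset.mem_range] at hb
      rw [← Finset.sum_filter]
      have hfil : (Finset.range (2 ^ i)).filter (fun a => b ≤ a) = Finset.Ico b (2 ^ i) := by
        ext c; simp [Finset.mem_Ico]; omega
      rw [hfil, Finset.sum_const, Nat.card_Ico, nsmul_eq_mul]
      have h1 : ((2 ^ i - b : ℕ) : ℚ) = 2 ^ i - b := by
        push_cast [Nat.cast_sub (le_of_lt hb)]; ring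
      rw [h1]
      have : (2:ℚ) ^ i - b ≠ 0 := by
        have : (b:ℚ) < 2 ^ i := by exact_mod_cast hb
        intro h; linarith
      field_simp
    rw [Finset.sum_congr rfl this, Finset.sum_const, Finset.card_range, nsmul_eq_mul, mul_one]
    push_cast; ring
  have part2 : ∑ a ∈ Finset.range (2 ^ i), (if a + 1 = 2 ^ i then (0:ℚ) else 1) = 2 ^ i - 1 := by
    rw [Finset.sum_ite]
    simp only [Finset.sum_const_zero, zero_add, Finset.sum_const, nsmul_eq_mul, mul_one]
    have hfil : (Finset.range (2 ^ i)).filter (fun a => ¬ a + 1 = 2 ^ i) =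
        Finset.range (2 ^ i - 1) := by
      ext a
      simp only [Finset.mem_filter, Finset.mem_range]
      have := Nat.one_le_two_pow (n := i)
      omega
    rw [hfil, Finset.card_range]
    push_cast [Nat.cast_sub (Nat.one_le_two_pow (n := i))]
    ring
  rw [part1, part2]
  push_cast
  ring

lemma Ssum_zero (i : ℕ) : Ssum 0 i = 4 ^ i := by
  unfold Ssum
  rw [show (0:ℕ) + i = i by omega]
  have key : ∀ a ∈ Finset.range (2 ^ i), ∀ b ∈ Finset.range (2 ^ i),
      icard i (a, b) / tq 0 i (a, b) = 1 := by
    intro a ha b hb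
    rw [Finset.mem_range] at ha hb
    rw [tq_zero, div_self (ne_of_gt (icard_pos ha hb))]
  calc ∑ a ∈ Finset.range (2 ^ i), ∑ b ∈ Finset.range (2 ^ i), icard i (a, b) / tq 0 i (a, b)
      = ∑ a ∈ Finset.range (2 ^ i), ∑ b ∈ Finset.range (2 ^ i), (1:ℚ) := by
        refine Finset.sum_congr rfl fun a ha => Finset.sum_congr rfl fun b hb => key a ha b hb
    _ = 4 ^ i := by
        simp only [Finset.sum_const, Finset.card_range, nsmul_eq_mul, mul_one]
        push_cast
        rw [show (4:ℚ) ^ i = (2 ^ i) * (2 ^ i) by rw [← mul_pow]; norm_num]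

lemma tq_succ (c i : ℕ) (x : ℕ × ℕ) :
    tq (c + 1) i x =
      if x.1 < 2 ^ (c + i) then
        if x.2 < 2 ^ (c + i) then tq c i x else 2 ^ (c + i)
      else
        if x.2 < 2 ^ (c + i) then (2 ^ (c + i) : ℚ)
        else tq c i (x.1 - 2 ^ (c + i), x.2 - 2 ^ (c + i)) := rfl

lemma pow_succ_two (c i : ℕ) : 2 ^ (c + 1 + i) = 2 * 2 ^ (c + i) := by
  rw [show c + 1 + i = (c + i) + 1 by omega, pow_succ]; ring

lemma Hsum_succ (c i : ℕ) : Hsum (c + 1) i = 2 * Hsum c i + 2 * 2 ^ (c + i) := by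
  have hn : (0:ℚ) < 2 ^ (c + i) := by positivity
  unfold Hsum
  rw [pow_succ_two c i, sum_range_two_mul]
  rw [Finset.sum_congr rfl fun a _ => sum_range_two_mul (2 ^ (c + i)) _]
  rw [Finset.sum_congr rfl fun a _ => sum_range_two_mul (2 ^ (c + i)) _]
  rw [Finset.sum_add_distrib, Finset.sum_add_distrib]
  have T1 : ∀ a ∈ Finset.range (2 ^ (c + i)), ∀ b ∈ Finset.range (2 ^ (c + i)),
      (1:ℚ) / tq (c + 1) i (a, b) = 1 / tq c i (a, b) := by
    intro a ha b hb
    rw [Finset.mem_range] at ha hb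
    rw [tq_succ, if_pos ha, if_pos hb]
  have T2 : ∀ a ∈ Finset.range (2 ^ (c + i)), ∀ b ∈ Finset.range (2 ^ (c + i)),
      (1:ℚ) / tq (c + 1) i (a, 2 ^ (c + i) + b) = 1 / 2 ^ (c + i) := by
    intro a ha b hb
    rw [Finset.mem_range] at ha hb
    rw [tq_succ, if_pos ha, if_neg (by omega)]
  have T3 : ∀ a ∈ Finset.range (2 ^ (c + i)), ∀ b ∈ Finset.range (2 ^ (c + i)),
      (1:ℚ) / tq (c + 1) i (2 ^ (c + i) + a, b) = 1 / 2 ^ (c + i) := by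
    intro a ha b hb
    rw [Finset.mem_range] at ha hb
    rw [tq_succ, if_neg (by omega), if_pos hb]
  have T4 : ∀ a ∈ Finset.range (2 ^ (c + i)), ∀ b ∈ Finset.range (2 ^ (c + i)),
      (1:ℚ) / tq (c + 1) i (2 ^ (c + i) + a, 2 ^ (c + i) + b) = 1 / tq c i (a, b) := by
    intro a ha b hb
    rw [Finset.mem_range] at ha hb
    rw [tq_succ, if_neg (by omega), if_neg (by omega)]
    simp only [Nat.add_sub_cancel_left]
  have e1 : ∀ a ∈ Finset.range (2 ^ (c + i)),
      (∑ b ∈ Finset.range (2 ^ (c + i)), (1:ℚ) / tq (c + 1) i (a, b)) =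
        ∑ b ∈ Finset.range (2 ^ (c + i)), 1 / tq c i (a, b) :=
    fun a ha => Finset.sum_congr rfl fun b hb => T1 a ha b hb
  have e2 : ∀ a ∈ Finset.range (2 ^ (c + i)),
      (∑ b ∈ Finset.range (2 ^ (c + i)), (1:ℚ) / tq (c + 1) i (a, 2 ^ (c + i) + b)) =
        (2 ^ (c + i) : ℚ) * (1 / 2 ^ (c + i)) := by
    intro a ha
    rw [Finset.sum_congr rfl fun b hb => T2 a ha b hb, Finset.sum_const, Finset.card_range,
      nsmul_eq_mul]
    push_cast; ring
  have e3 : ∀ a ∈ Finset.range (2 ^ (c + i)),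
      (∑ b ∈ Finset.range (2 ^ (c + i)), (1:ℚ) / tq (c + 1) i (2 ^ (c + i) + a, b)) =
        (2 ^ (c + i) : ℚ) * (1 / 2 ^ (c + i)) := by
    intro a ha
    rw [Finset.sum_congr rfl fun b hb => T3 a ha b hb, Finset.sum_const, Finset.card_range,
      nsmul_eq_mul]
    push_cast; ring
  have e4 : ∀ a ∈ Finset.range (2 ^ (c + i)),
      (∑ b ∈ Finset.range (2 ^ (c + i)), (1:ℚ) / tq (c + 1) i (2 ^ (c + i) + a, 2 ^ (c + i) + b)) =
        ∑ b ∈ Finset.range (2 ^ (c + i)), 1 / tq c i (a, b) :=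
    fun a ha => Finset.sum_congr rfl fun b hb => T4 a ha b hb
  rw [Finset.sum_congr rfl e1, Finset.sum_congr rfl e2, Finset.sum_congr rfl e3,
    Finset.sum_congr rfl e4]
  simp only [Finset.sum_const, Finset.card_range, nsmul_eq_mul]
  push_cast
  field_simp
  ring

lemma sum_linear (n : ℕ) (C : ℚ) :
    ∑ a ∈ Finset.range n, (C - (a : ℚ)) = n * C - n * (n - 1) / 2 := by
  rw [Finset.sum_sub_distrib, sum_range_cast, Finset.sum_const, Finset.card_range, nsmul_eq_mul]

lemma Ssum_succ (c i : ℕ) :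
    Ssum (c + 1) i = 2 * Ssum c i + 2 ^ (c + i) * Hsum c i +
      3 * (2 ^ (c + i) * 2 ^ (c + i)) := by
  have hne : ((2:ℚ) ^ (c + i)) ≠ 0 := by positivity
  have hq : (2:ℚ) ^ (c + 1 + i) = 2 * 2 ^ (c + i) := by
    rw [show c + 1 + i = (c + i) + 1 by omega, pow_succ]; ring
  unfold Ssum Hsum
  rw [pow_succ_two c i, sum_range_two_mul]
  rw [Finset.sum_congr rfl fun a _ => sum_range_two_mul (2 ^ (c + i)) _]
  rw [Finset.sum_congr rfl fun a _ => sum_range_two_mul (2 ^ (c + i)) _]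
  rw [Finset.sum_add_distrib, Finset.sum_add_distrib]
  have e1 : ∀ a ∈ Finset.range (2 ^ (c + i)),
      (∑ b ∈ Finset.range (2 ^ (c + i)), icard (c + 1 + i) (a, b) / tq (c + 1) i (a, b)) =
        (∑ b ∈ Finset.range (2 ^ (c + i)), icard (c + i) (a, b) / tq c i (a, b)) +
          2 ^ (c + i) * ∑ b ∈ Finset.range (2 ^ (c + i)), 1 / tq c i (a, b) := by
    intro a ha
    rw [Finset.mul_sum, ← Finset.sum_add_distrib]
    refine Finset.sum_congr rfl fun b hb => ?_
    rw [Finset.mem_range] at ha hb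
    rw [tq_succ, if_pos ha, if_pos hb, show c + 1 + i = (c + i) + 1 by omega, icard_succ]
    ring
  have e2 : ∀ a ∈ Finset.range (2 ^ (c + i)),
      (∑ b ∈ Finset.range (2 ^ (c + i)),
          icard (c + 1 + i) (a, 2 ^ (c + i) + b) / tq (c + 1) i (a, 2 ^ (c + i) + b)) =
        2 * 2 ^ (c + i) - 1 - (a : ℚ) := by
    intro a ha
    rw [Finset.mem_range] at ha
    have hterm : ∀ b ∈ Finset.range (2 ^ (c + i)),
        icard (c + 1 + i) (a, 2 ^ (c + i) + b) / tq (c + 1) i (a, 2 ^ (c + i) + b) =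
          (2 * 2 ^ (c + i) - 1 - (a : ℚ)) / 2 ^ (c + i) := by
      intro b hb
      rw [Finset.mem_range] at hb
      rw [tq_succ, if_pos ha, if_neg (by omega)]
      unfold icard
      dsimp only
      rw [if_neg (by omega), hq]
    rw [Finset.sum_congr rfl hterm, Finset.sum_const, Finset.card_range, nsmul_eq_mul]
    push_cast
    field_simp
  have e3 : ∀ a ∈ Finset.range (2 ^ (c + i)),
      (∑ b ∈ Finset.range (2 ^ (c + i)),
          icard (c + 1 + i) (2 ^ (c + i) + a, b) / tq (c + 1) i (2 ^ (c + i) + a, b)) =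
        ∑ b ∈ Finset.range (2 ^ (c + i)), (2 * 2 ^ (c + i) - (b : ℚ)) / 2 ^ (c + i) := by
    intro a ha
    rw [Finset.mem_range] at ha
    refine Finset.sum_congr rfl fun b hb => ?_
    rw [Finset.mem_range] at hb
    rw [tq_succ, if_neg (by omega), if_pos hb]
    unfold icard
    dsimp only
    rw [if_pos (by omega), hq]
  have e4 : ∀ a ∈ Finset.range (2 ^ (c + i)),
      (∑ b ∈ Finset.range (2 ^ (c + i)),
          icard (c + 1 + i) (2 ^ (c + i) + a, 2 ^ (c + i) + b) /
            tq (c + 1) i (2 ^ (c + i) + a, 2 ^ (c + i) + b)) =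
        ∑ b ∈ Finset.range (2 ^ (c + i)), icard (c + i) (a, b) / tq c i (a, b) := by
    intro a ha
    refine Finset.sum_congr rfl fun b hb => ?_
    rw [Finset.mem_range] at ha hb
    rw [tq_succ, if_neg (by omega), if_neg (by omega)]
    simp only [Nat.add_sub_cancel_left]
    rw [show c + 1 + i = (c + i) + 1 by omega, icard_shift (c + i) (2 ^ (c + i)) a b rfl]
  rw [Finset.sum_congr rfl e1, Finset.sum_congr rfl e2, Finset.sum_congr rfl e3,
    Finset.sum_congr rfl e4]
  rw [Finset.sum_add_distrib, ← Finset.mul_sum]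
  rw [sum_linear (2 ^ (c + i)) (2 * 2 ^ (c + i) - 1)]
  have hC : (∑ _a ∈ Finset.range (2 ^ (c + i)),
      ∑ b ∈ Finset.range (2 ^ (c + i)), (2 * 2 ^ (c + i) - (b : ℚ)) / 2 ^ (c + i)) =
        (2 ^ (c + i) : ℚ) * ((2 ^ (c + i) * (2 * 2 ^ (c + i)) -
          2 ^ (c + i) * (2 ^ (c + i) - 1) / 2) / 2 ^ (c + i)) := by
    rw [Finset.sum_const, Finset.card_range, nsmul_eq_mul, ← Finset.sum_div,
      sum_linear (2 ^ (c + i)) (2 * 2 ^ (c + i))]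
    push_cast
    ring
  rw [hC]
  push_cast
  field_simp
  ring

lemma qpow_succ (c i : ℕ) : (2:ℚ) ^ (c + 1 + i) = 2 * 2 ^ (c + i) := by
  rw [show c + 1 + i = (c + i) + 1 by omega, pow_succ]; ring

lemma Hsum_eq (c i : ℕ) : Hsum c i = ((c : ℚ) + 2) * 2 ^ (c + i) - 2 ^ c := by
  induction c with
  | zero => rw [Hsum_zero, Nat.zero_add]; push_cast; ring
  | succ c ih =>
    rw [Hsum_succ, ih, qpow_succ, pow_succ]
    push_cast
    ring

lemma Ssum_eq (c i : ℕ) : Ssum c i =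
    (((c : ℚ) + 3) * (2 ^ (c + i) * 2 ^ (c + i)) - 2 ^ (c + i) * 2 ^ i -
      (2 ^ c - 1) * 2 ^ (c + i)) / 2 := by
  induction c with
  | zero =>
    rw [Ssum_zero, Nat.zero_add]
    have : (4:ℚ) ^ i = 2 ^ i * 2 ^ i := by rw [← mul_pow]; norm_num
    rw [this]; push_cast; ring
  | succ c ih =>
    rw [Ssum_succ, ih, Hsum_eq, qpow_succ, pow_succ]
    push_cast
    ring


lemma tile_card (c i : ℕ) (x : ℕ × ℕ) (h1 : x.1 < 2 ^ (c + i)) (h2 : x.2 < 2 ^ (c + i)) :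
    ((tileOf (BBA c i) x).card : ℚ) = tq c i x := by
  obtain ⟨R, hR, hcard⟩ := tile_filter c i x h1 h2
  unfold tileOf
  rw [hR, Finset.sup_singleton]
  exact hcard

lemma avg_eq' (c i : ℕ) :
    avgObjPAR (c + i) Auc (BBA c i) =
      ((c : ℚ) + 3) / 2 - 1 / 2 ^ (c + 1) - (2 ^ c - 1) / 2 ^ (c + i + 1) := by
  unfold avgObjPAR
  have hsum : (∑ x ∈ Vk (c + i),
      ((ideal (c + i) Auc x).card : ℚ) / ((tileOf (BBA c i) x).card : ℚ)) = Ssum c i := by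
    rw [Vk, Finset.sum_product]
    unfold Ssum
    refine Finset.sum_congr rfl fun a ha => Finset.sum_congr rfl fun b hb => ?_
    rw [Finset.mem_range] at ha hb
    have hmem : ((a, b) : ℕ × ℕ) ∈ Vk (c + i) := mem_Vk.mpr ⟨ha, hb⟩
    rw [ideal_card hmem, tile_card c i (a, b) ha hb]
  rw [hsum, Ssum_eq]
  have h1 : (2:ℚ) ^ (2 * (c + i)) = 2 ^ (c + i) * 2 ^ (c + i) := by
    rw [two_mul, pow_add]
  have h2 : (2:ℚ) ^ (c + i) = 2 ^ c * 2 ^ i := pow_add 2 c i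
  have h3 : (2:ℚ) ^ (c + i + 1) = 2 ^ c * 2 ^ i * 2 := by rw [pow_succ, h2]
  have h4 : (2:ℚ) ^ (c + 1) = 2 ^ c * 2 := pow_succ 2 c
  rw [h1, h3, h4, h2]
  have hc : ((2:ℚ) ^ c) ≠ 0 := by positivity
  have hi : ((2:ℚ) ^ i) ≠ 0 := by positivity
  field_simp

lemma avg_eq (c k : ℕ) (h : c ≤ k) :
    avgObjPAR k Auc (BBA c (k - c)) =
      ((c : ℚ) + 3) / 2 - 1 / 2 ^ (c + 1) - (2 ^ c - 1) / 2 ^ (k + 1) := by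
  obtain ⟨i, rfl⟩ : ∃ i, k = c + i := ⟨k - c, by omega⟩
  rw [show c + i - c = i by omega, avg_eq']

lemma avg_bounds (c k : ℕ) (h : c ≤ k) :
    ((c : ℚ) + 1) / 2 ≤ avgObjPAR k Auc (BBA c (k - c)) ∧
      avgObjPAR k Auc (BBA c (k - c)) ≤ ((c : ℚ) + 3) / 2 := by
  rw [avg_eq c k h]
  have hc1 : (0:ℚ) < 2 ^ (c + 1) := by positivity
  have hk1 : (0:ℚ) < 2 ^ (k + 1) := by positivity
  have t1 : (1:ℚ) / 2 ^ (c + 1) ≤ 1 / 2 := by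
    apply one_div_le_one_div_of_le (by norm_num)
    calc (2:ℚ) = 2 ^ 1 := (pow_one 2).symm
      _ ≤ 2 ^ (c + 1) := by apply pow_le_pow_right₀ (by norm_num); omega
  have t1' : (0:ℚ) ≤ 1 / 2 ^ (c + 1) := by positivity
  have hone : (1:ℚ) ≤ 2 ^ c := by
    calc (1:ℚ) = 2 ^ 0 := (pow_zero 2).symm
      _ ≤ 2 ^ c := by apply pow_le_pow_right₀ (by norm_num); omega
  have t2' : (0:ℚ) ≤ (2 ^ c - 1) / 2 ^ (k + 1) := by
    apply div_nonneg _ (le_of_lt hk1)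
    linarith
  have t2 : ((2:ℚ) ^ c - 1) / 2 ^ (k + 1) ≤ 1 / 2 := by
    rw [div_le_div_iff₀ hk1 (by norm_num)]
    have hck : (2:ℚ) ^ c ≤ 2 ^ k := by apply pow_le_pow_right₀ (by norm_num); omega
    have hpk : (2:ℚ) ^ (k + 1) = 2 ^ k * 2 := pow_succ 2 k
    linarith
  constructor <;> linarith

/-- for `g` with `0 ≤ g(k) ≤ k`, the sequence of average-case
objective PARs of `T_{g(k),k−g(k)}` for `A_k` is bounded iff `g` is bounded;
in particular, for `0 ≤ c ≤ k` this PAR lies between `(c+1)/2` and `(c+3)/2`. -/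
theorem stmt13 (g : ℕ → ℕ) (hg : ∀ k, 1 ≤ k → g k ≤ k) :
    ((∃ M : ℚ, ∀ k, 1 ≤ k → avgObjPAR k Auc (BBA (g k) (k - g k)) ≤ M) ↔
        ∃ N : ℕ, ∀ k, g k ≤ N) ∧
      ∀ c k : ℕ, c ≤ k →
        ((c : ℚ) + 1) / 2 ≤ avgObjPAR k Auc (BBA c (k - c)) ∧
          avgObjPAR k Auc (BBA c (k - c)) ≤ ((c : ℚ) + 3) / 2 := by
  constructor
  · constructor
    · rintro ⟨M, hM⟩
      refine ⟨max (g 0) ⌈2 * M⌉₊, fun k => ?_⟩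
      rcases Nat.eq_zero_or_pos k with rfl | hk
      · exact le_max_left _ _
      · have hgk := hg k hk
        have hlow := (avg_bounds (g k) k hgk).1
        have hMk := hM k hk
        have hq : ((g k : ℚ)) ≤ 2 * M := by linarith
        have h2 : ((g k : ℚ)) ≤ (⌈2 * M⌉₊ : ℚ) := hq.trans (Nat.le_ceil _)
        exact le_trans (Nat.cast_le.mp h2) (le_max_right _ _)
    · rintro ⟨N, hN⟩
      refine ⟨((N : ℚ) + 3) / 2, fun k hk => ?_⟩
      have hgk := hg k hk
      have hup := (avg_bounds (g k) k hgk).2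
      have hgN : ((g k : ℚ)) ≤ N := by exact_mod_cast hN k
      linarith
  · intro c k h
    exact avg_bounds c k h
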